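/- With the notation of the reduction: H = H₀ ⊕ Ĥ, φ: H → ℝ locally Lipschitz, θ: H₀ → Ĥ continuous with φ(u+θ(u)) = inf_{v∈Ĥ}φ(u+v), φ̄(u) = φ(u+θ(u)). Then the Clarke generalized directional derivatives satisfy φ̄⁰(u; h) ≤ φ⁰(u + θ(u); h) for all u, h ∈ H₀, and hence ∂φ̄(u) ⊆ p_{H₀*} ∂φ(u + θ(u)), where p_{H₀*} is the orthogonal projection (adjoint of the inclusion H₀ ↪ H). -/

import Mathlib

open Filter Topology

noncomputable def clarkeDeriv {X : Type*} [NormedAddCommGroup X] [NormedSpace ℝ X]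
    (φ : X → ℝ) (x h : X) : ℝ :=
  Filter.limsup (fun p : X × ℝ => (φ (p.1 + p.2 • h) - φ p.1) / p.2)
    ((nhds x) ×ˢ (nhdsWithin 0 (Set.Ioi (0 : ℝ))))


def clarkeSubdiff {X : Type*} [NormedAddCommGroup X] [NormedSpace ℝ X]
    (φ : X → ℝ) (x : X) : Set (X →L[ℝ] ℝ) :=
  {xs | ∀ h, xs h ≤ clarkeDeriv φ x h}

namespace ClarkeAux

open Set Metric

variable {X : Type*} [NormedAddCommGroup X] [NormedSpace ℝ X]

/-- The Clarke difference quotient. -/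
noncomputable def cq (φ : X → ℝ) (h : X) : X × ℝ → ℝ :=
  fun p => (φ (p.1 + p.2 • h) - φ p.1) / p.2

/-- The Clarke filter. -/
noncomputable def cL (x : X) : Filter (X × ℝ) := (𝓝 x) ×ˢ (𝓝[>] (0 : ℝ))

lemma clarkeDeriv_eq (φ : X → ℝ) (x h : X) :
    clarkeDeriv φ x h = limsup (cq φ h) (cL x) := rfl

instance (x : X) : (cL x).NeBot := by
  unfold cL; infer_instance

lemma eventually_pos (x : X) : ∀ᶠ p in cL x, 0 < p.2 := by
  have : Tendsto (fun p : X × ℝ => p.2) (cL x) (𝓝[>] (0:ℝ)) := tendsto_snd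
  exact this.eventually eventually_mem_nhdsWithin

/-- Uniform eventual bound on the Clarke quotients near a point, for a locally
Lipschitz function. -/
lemma ev_bound {φ : X → ℝ} (hφ : LocallyLipschitz φ) (x : X) :
    ∃ K : ℝ, 0 ≤ K ∧ ∀ h : X, ∀ᶠ p in cL x, |cq φ h p| ≤ K * ‖h‖ := by
  obtain ⟨K, t, ht, hlip⟩ := hφ x
  obtain ⟨ε, hε, hball⟩ := Metric.mem_nhds_iff.1 ht
  refine ⟨K, K.coe_nonneg, fun h => ?_⟩
  have hh1 : (0:ℝ) < ‖h‖ + 1 := by positivity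
  set δ : ℝ := ε / (2 * (‖h‖ + 1)) with hδdef
  have hδ : 0 < δ := by positivity
  have hδ2 : δ * (2 * (‖h‖ + 1)) = ε := div_mul_cancel₀ _ (by positivity)
  have h1 : ∀ᶠ y in 𝓝 x, y ∈ ball x (ε/2) := by
    filter_upwards [Metric.ball_mem_nhds x (by positivity : (0:ℝ) < ε/2)] with y hy using hy
  have h2 : ∀ᶠ s in 𝓝[>] (0:ℝ), s ∈ Ioo 0 δ :=
    Ioo_mem_nhdsGT_of_mem ⟨le_refl 0, hδ⟩
  filter_upwards [h1.prod_mk h2] with p hp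
  have hy := hp.1
  have hs0 := hp.2.1
  have hsδ := hp.2.2
  have hsn : ‖p.2 • h‖ = p.2 * ‖h‖ := by
    rw [norm_smul, Real.norm_eq_abs, abs_of_pos hs0]
  have hyt : p.1 ∈ t := hball (by
    have := mem_ball.1 hy
    exact mem_ball.2 (lt_of_lt_of_le this (by linarith)))
  have hyht : p.1 + p.2 • h ∈ t := by
    apply hball
    rw [mem_ball]
    have hd : dist (p.1 + p.2 • h) x ≤ dist (p.1 + p.2 • h) p.1 + dist p.1 x :=
      dist_triangle _ _ _
    have hd1 : dist (p.1 + p.2 • h) p.1 = ‖p.2 • h‖ := by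
      simp [dist_eq_norm]
    have hsm : p.2 * ‖h‖ < ε / 2 := by
      have h1 : p.2 * ‖h‖ ≤ p.2 * (‖h‖ + 1) := by nlinarith [hs0.le]
      have h2 : p.2 * (‖h‖ + 1) < δ * (‖h‖ + 1) := by nlinarith
      nlinarith
    have hy2 := mem_ball.1 hy
    rw [hd1, hsn] at hd
    linarith
  have key : |φ (p.1 + p.2 • h) - φ p.1| ≤ (K : ℝ) * (p.2 * ‖h‖) := by
    have hle := hlip.dist_le_mul _ hyht _ hyt
    rw [Real.dist_eq] at hle
    have : dist (p.1 + p.2 • h) p.1 = ‖p.2 • h‖ := by simp [dist_eq_norm]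
    rw [this, hsn] at hle
    exact hle
  have : |cq φ h p| = |φ (p.1 + p.2 • h) - φ p.1| / p.2 := by
    rw [cq, abs_div, abs_of_pos hs0]
  rw [this, div_le_iff₀ hs0]
  calc |φ (p.1 + p.2 • h) - φ p.1| ≤ (K : ℝ) * (p.2 * ‖h‖) := key
    _ = (K : ℝ) * ‖h‖ * p.2 := by ring

section absFacts

variable {ι : Type*} {l : Filter ι} [l.NeBot] {f : ι → ℝ} {B : ℝ}

lemma bddAbove_of_abs (hb : ∀ᶠ i in l, |f i| ≤ B) : IsBoundedUnder (· ≤ ·) l f :=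
  ⟨B, eventually_map.2 <| hb.mono fun i hi => (abs_le.1 hi).2⟩

lemma bddBelow_of_abs (hb : ∀ᶠ i in l, |f i| ≤ B) : IsBoundedUnder (· ≥ ·) l f :=
  ⟨-B, eventually_map.2 <| hb.mono fun i hi => (abs_le.1 hi).1⟩

lemma cobddAbove_of_abs (hb : ∀ᶠ i in l, |f i| ≤ B) : IsCoboundedUnder (· ≤ ·) l f :=
  (bddBelow_of_abs hb).isCoboundedUnder_le

lemma cobddBelow_of_abs (hb : ∀ᶠ i in l, |f i| ≤ B) : IsCoboundedUnder (· ≥ ·) l f :=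
  (bddAbove_of_abs hb).isCoboundedUnder_ge

end absFacts

/-- `clarkeDeriv φ x h ≤ K ‖h‖`. -/
lemma clarkeDeriv_le {φ : X → ℝ} {x : X} {K : ℝ}
    (hK : ∀ h : X, ∀ᶠ p in cL x, |cq φ h p| ≤ K * ‖h‖) (h : X) :
    clarkeDeriv φ x h ≤ K * ‖h‖ := by
  rw [clarkeDeriv_eq]
  exact limsup_le_of_le (cobddAbove_of_abs (hK h))
    ((hK h).mono fun p hp => (abs_le.1 hp).2)

/-- Subadditivity of the Clarke derivative. -/
lemma clarkeDeriv_add_le {φ : X → ℝ} (hφ : LocallyLipschitz φ) (x h₁ h₂ : X) :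
    clarkeDeriv φ x (h₁ + h₂) ≤ clarkeDeriv φ x h₁ + clarkeDeriv φ x h₂ := by
  obtain ⟨K, hK0, hK⟩ := ev_bound hφ x
  set G : X × ℝ → X × ℝ := fun p => (p.1 + p.2 • h₂, p.2) with hGdef
  have hGt : Tendsto G (cL x) (cL x) := by
    refine Tendsto.prodMk ?_ tendsto_snd
    have hsnd : Tendsto (fun p : X × ℝ => p.2) (cL x) (𝓝 (0:ℝ)) :=
      tendsto_snd.mono_right nhdsWithin_le_nhds
    have := (tendsto_fst (f := 𝓝 x) (g := 𝓝[>] (0:ℝ))).add (hsnd.smul_const h₂)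
    simpa [cL] using this
  have hkey : ∀ p : X × ℝ, cq φ (h₁ + h₂) p = cq φ h₁ (G p) + cq φ h₂ p := by
    intro p
    have harg : p.1 + p.2 • (h₁ + h₂) = (p.1 + p.2 • h₂) + p.2 • h₁ := by
      rw [smul_add]; abel
    simp only [cq, hGdef, harg]
    ring
  have hb1 : ∀ᶠ p in cL x, |cq φ h₁ (G p)| ≤ K * ‖h₁‖ := hGt.eventually (hK h₁)
  have hb2 := hK h₂
  rw [clarkeDeriv_eq, clarkeDeriv_eq, clarkeDeriv_eq]
  have heq : cq φ (h₁ + h₂) = (fun p => cq φ h₁ (G p)) + fun p => cq φ h₂ p := by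
    funext p; exact hkey p
  rw [heq]
  have step1 : limsup ((fun p => cq φ h₁ (G p)) + fun p => cq φ h₂ p) (cL x) ≤
      limsup (fun p => cq φ h₁ (G p)) (cL x) + limsup (cq φ h₂) (cL x) :=
    limsup_add_le (bddBelow_of_abs hb1) (bddAbove_of_abs hb1)
      (cobddAbove_of_abs hb2) (bddAbove_of_abs hb2)
  have step2 : limsup (fun p => cq φ h₁ (G p)) (cL x) ≤ limsup (cq φ h₁) (cL x) := by
    have hcomp : limsup (fun p => cq φ h₁ (G p)) (cL x) =
        limsup (cq φ h₁) (map G (cL x)) := limsup_comp (cq φ h₁) G (cL x)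
    rw [hcomp]
    refine limsup_le_limsup_of_le hGt ?_ (bddAbove_of_abs (hK h₁))
    exact cobddAbove_of_abs (eventually_map.2 (hGt.eventually (hK h₁)))
  calc limsup ((fun p => cq φ h₁ (G p)) + fun p => cq φ h₂ p) (cL x)
      ≤ limsup (fun p => cq φ h₁ (G p)) (cL x) + limsup (cq φ h₂) (cL x) := step1
    _ ≤ limsup (cq φ h₁) (cL x) + limsup (cq φ h₂) (cL x) := by
        exact add_le_add step2 le_rfl

lemma tendsto_mul_left_Ioi {c : ℝ} (hc : 0 < c) :
    Tendsto (fun t : ℝ => c * t) (𝓝[>] (0:ℝ)) (𝓝[>] (0:ℝ)) := by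
  apply tendsto_nhdsWithin_of_tendsto_nhds_of_eventually_within
  · have : Tendsto (fun t : ℝ => c * t) (𝓝 (0:ℝ)) (𝓝 (c * 0)) :=
      (continuous_const.mul continuous_id).tendsto 0
    simpa using this.mono_left nhdsWithin_le_nhds
  · exact eventually_mem_nhdsWithin.mono fun t ht => mul_pos hc ht

lemma map_mul_left_Ioi {c : ℝ} (hc : 0 < c) :
    map (fun t : ℝ => c * t) (𝓝[>] (0:ℝ)) = 𝓝[>] (0:ℝ) := by
  refine le_antisymm (tendsto_mul_left_Ioi hc) ?_
  have h1 : (𝓝[>] (0:ℝ)) = map ((fun t : ℝ => c * t) ∘ (fun t : ℝ => c⁻¹ * t))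
      (𝓝[>] (0:ℝ)) := by
    have : ((fun t : ℝ => c * t) ∘ (fun t : ℝ => c⁻¹ * t)) = id := by
      funext t
      simp [Function.comp, ← mul_assoc, mul_inv_cancel₀ hc.ne']
    rw [this, map_id]
  calc (𝓝[>] (0:ℝ)) = map ((fun t : ℝ => c * t) ∘ (fun t : ℝ => c⁻¹ * t))
        (𝓝[>] (0:ℝ)) := h1
    _ = map (fun t : ℝ => c * t) (map (fun t : ℝ => c⁻¹ * t) (𝓝[>] (0:ℝ))) :=
        (map_map).symm
    _ ≤ map (fun t : ℝ => c * t) (𝓝[>] (0:ℝ)) :=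
        map_mono (tendsto_mul_left_Ioi (inv_pos.2 hc))

/-- Positive homogeneity of the Clarke derivative. -/
lemma clarkeDeriv_smul {φ : X → ℝ} (hφ : LocallyLipschitz φ) (x : X) {c : ℝ}
    (hc : 0 < c) (h : X) :
    clarkeDeriv φ x (c • h) = c * clarkeDeriv φ x h := by
  obtain ⟨K, hK0, hK⟩ := ev_bound hφ x
  set G : X × ℝ → X × ℝ := fun p => (p.1, c * p.2) with hGdef
  have hmap : map G (cL x) = cL x := by
    have hG : G = Prod.map id (fun t : ℝ => c * t) := rfl
    rw [hG]
    show map (Prod.map id fun t : ℝ => c * t) ((𝓝 x) ×ˢ (𝓝[>] (0:ℝ))) =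
      (𝓝 x) ×ˢ (𝓝[>] (0:ℝ))
    rw [← prod_map_map_eq', map_id, map_mul_left_Ioi hc]
  have hkey : ∀ p : X × ℝ, cq φ (c • h) p = c * cq φ h (G p) := by
    intro p
    have harg : p.1 + p.2 • (c • h) = p.1 + (c * p.2) • h := by
      rw [smul_smul, mul_comm]
    simp only [cq, hGdef, harg]
    rw [← mul_div_assoc, mul_div_mul_left _ _ hc.ne']
  rw [clarkeDeriv_eq, clarkeDeriv_eq]
  have heq : cq φ (c • h) = (fun q => c * cq φ h q) ∘ G := by
    funext p; exact hkey p
  rw [heq, limsup_comp, hmap]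
  have hb : ∀ᶠ p in cL x, |cq φ h p| ≤ K * ‖h‖ := hK h
  have hb' : ∀ᶠ p in cL x, |c * cq φ h p| ≤ c * (K * ‖h‖) := by
    filter_upwards [hb] with p hp
    rw [abs_mul, abs_of_pos hc]
    exact mul_le_mul_of_nonneg_left hp hc.le
  have := (OrderIso.mulLeft₀ c hc).limsup_apply (f := cL x) (u := cq φ h)
    (bddAbove_of_abs hb) (cobddAbove_of_abs hb)
    (bddAbove_of_abs hb') (cobddAbove_of_abs hb')
  exact this.symm

end ClarkeAux

set_option maxHeartbeats 1000000 in
open ClarkeAux Set Metric in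
/-- Clarke derivative estimate for the reduced functional: `φ̄⁰(u;h) ≤ φ⁰(u+θ(u);h)`
and hence `∂φ̄(u) ⊆ p_{H₀*}∂φ(u+θ(u))` (an element of `∂φ̄(u)` is the restriction
to `H₀` of an element of `∂φ(u+θ(u))`). -/
theorem reduced_functional_subdiff {H : Type*} [NormedAddCommGroup H]
    [InnerProductSpace ℝ H] [CompleteSpace H]
    (H₀ Hhat : Submodule ℝ H)
    (horth : ∀ u ∈ H₀, ∀ v ∈ Hhat, inner ℝ u v = (0 : ℝ))
    (hcompl : ∀ x : H, ∃ u ∈ H₀, ∃ v ∈ Hhat, x = u + v)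
    (φ : H → ℝ) (hφ : LocallyLipschitz φ)
    (θ : H₀ → Hhat) (hθc : Continuous θ)
    (hθmin : ∀ (u : H₀) (v : Hhat), φ ((u : H) + (θ u : H)) ≤ φ ((u : H) + (v : H))) :
    (∀ u h : H₀,
      clarkeDeriv (fun w : H₀ => φ ((w : H) + (θ w : H))) u h ≤
        clarkeDeriv φ ((u : H) + (θ u : H)) (h : H)) ∧
    (∀ u : H₀, ∀ us ∈ clarkeSubdiff (fun w : H₀ => φ ((w : H) + (θ w : H))) u,
      ∃ ws ∈ clarkeSubdiff φ ((u : H) + (θ u : H)), ∀ h : H₀, us h = ws (h : H)) := by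
  set φb : H₀ → ℝ := fun w : H₀ => φ ((w : H) + (θ w : H)) with hφbdef
  have hθcH : Continuous fun w : H₀ => (w : H) + (θ w : H) :=
    continuous_subtype_val.add (continuous_subtype_val.comp hθc)
  -- Part 1
  have part1 : ∀ u h : H₀,
      clarkeDeriv φb u h ≤ clarkeDeriv φ ((u : H) + (θ u : H)) (h : H) := by
    intro u h
    set x : H := (u : H) + (θ u : H) with hxdef
    obtain ⟨K, hK0, hK⟩ := ev_bound hφ x
    -- the two comparison maps
    set F : H₀ × ℝ → H × ℝ := fun p => ((p.1 : H) + (θ p.1 : H), p.2) with hFdef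
    set F' : H₀ × ℝ → H × ℝ :=
      fun p => ((p.1 : H) + (θ (p.1 + p.2 • h) : H), p.2) with hF'def
    have hfstTendsto : Tendsto (fun p : H₀ × ℝ => p.1 + p.2 • h) (cL u) (𝓝 u) := by
      have hsnd : Tendsto (fun p : H₀ × ℝ => p.2) (cL u) (𝓝 (0:ℝ)) :=
        tendsto_snd.mono_right nhdsWithin_le_nhds
      have := (tendsto_fst (f := 𝓝 u) (g := 𝓝[>] (0:ℝ))).add (hsnd.smul_const h)
      simpa [cL] using this
    have hF : Tendsto F (cL u) (cL x) := by
      refine Tendsto.prodMk ?_ tendsto_snd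
      exact (hθcH.tendsto u).comp tendsto_fst
    have hF' : Tendsto F' (cL u) (cL x) := by
      refine Tendsto.prodMk ?_ tendsto_snd
      have h1 : Tendsto (fun p : H₀ × ℝ => ((p.1 : H₀) : H)) (cL u) (𝓝 (u : H)) :=
        (continuous_subtype_val.tendsto u).comp tendsto_fst
      have h2 : Tendsto (fun p : H₀ × ℝ => (θ (p.1 + p.2 • h) : H)) (cL u)
          (𝓝 (θ u : H)) :=
        ((continuous_subtype_val.comp hθc).tendsto u).comp hfstTendsto
      exact h1.add h2
    -- pointwise comparison: φb quotient ≤ φ quotient along F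
    have hle : cq φb h ≤ᶠ[cL u] fun p => cq φ (h : H) (F p) := by
      filter_upwards [eventually_pos u] with p hp
      have hnum : φb (p.1 + p.2 • h) - φb p.1 ≤
          φ ((F p).1 + p.2 • (h : H)) - φ ((F p).1) := by
        have hmin := hθmin (p.1 + p.2 • h) (θ p.1)
        have harg : ((p.1 + p.2 • h : H₀) : H) + (θ p.1 : H) =
            (F p).1 + p.2 • (h : H) := by
          simp only [hFdef, Submodule.coe_add, SetLike.val_smul]
          abel
        have : φb (p.1 + p.2 • h) ≤ φ ((F p).1 + p.2 • (h : H)) := by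
          rw [← harg]; exact hmin
        have hF1 : φb p.1 = φ ((F p).1) := rfl
        linarith [this, hF1.le]
      have : cq φb h p = (φb (p.1 + p.2 • h) - φb p.1) / p.2 := rfl
      rw [this]
      have : cq φ (h : H) (F p) =
          (φ ((F p).1 + p.2 • (h : H)) - φ ((F p).1)) / p.2 := rfl
      rw [this]
      exact div_le_div_of_nonneg_right hnum hp.le
    -- lower bound on the φb quotient, giving coboundedness
    have hglow : ∀ᶠ p in cL u, -(K * ‖(h : H)‖) ≤ cq φb h p := by
      filter_upwards [eventually_pos u, hF'.eventually (hK (h : H))] with p hp hb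
      have hnum : φ ((F' p).1 + p.2 • (h : H)) - φ ((F' p).1) ≤
          φb (p.1 + p.2 • h) - φb p.1 := by
        have hmin := hθmin p.1 (θ (p.1 + p.2 • h))
        have harg : ((p.1 + p.2 • h : H₀) : H) + (θ (p.1 + p.2 • h) : H) =
            (F' p).1 + p.2 • (h : H) := by
          simp only [hF'def, Submodule.coe_add, SetLike.val_smul]
          abel
        have h1 : φ ((F' p).1 + p.2 • (h : H)) = φb (p.1 + p.2 • h) := by
          rw [← harg]
        have h2 : φb p.1 ≤ φ ((F' p).1) := hmin
        linarith [h1.le, h1.ge]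
      have hq : cq φ (h : H) (F' p) ≤ cq φb h p := by
        have e1 : cq φ (h : H) (F' p) =
            (φ ((F' p).1 + p.2 • (h : H)) - φ ((F' p).1)) / p.2 := rfl
        have e2 : cq φb h p = (φb (p.1 + p.2 • h) - φb p.1) / p.2 := rfl
        rw [e1, e2]
        exact div_le_div_of_nonneg_right hnum hp.le
      exact le_trans ((abs_le.1 hb).1) hq
    have hcobdd : IsCoboundedUnder (· ≤ ·) (cL u) (cq φb h) :=
      IsBoundedUnder.isCoboundedUnder_le ⟨-(K * ‖(h : H)‖), eventually_map.2 hglow⟩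
    have hFbdd : IsBoundedUnder (· ≤ ·) (cL u) (fun p => cq φ (h : H) (F p)) :=
      bddAbove_of_abs (hF.eventually (hK (h : H)))
    rw [clarkeDeriv_eq, clarkeDeriv_eq]
    have s1 : limsup (cq φb h) (cL u) ≤
        limsup (fun p => cq φ (h : H) (F p)) (cL u) :=
      limsup_le_limsup hle hcobdd hFbdd
    have s2 : limsup (fun p => cq φ (h : H) (F p)) (cL u) =
        limsup (cq φ (h : H)) (map F (cL u)) :=
      limsup_comp (cq φ (h : H)) F (cL u)
    have s3 : limsup (cq φ (h : H)) (map F (cL u)) ≤ limsup (cq φ (h : H)) (cL x) := by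
      refine limsup_le_limsup_of_le hF ?_ (bddAbove_of_abs (hK (h : H)))
      exact cobddAbove_of_abs (eventually_map.2 (hF.eventually (hK (h : H))))
    exact le_trans s1 (le_of_eq s2 |>.trans s3)
  refine ⟨part1, ?_⟩
  -- Part 2
  intro u us hus
  set x : H := (u : H) + (θ u : H) with hxdef
  obtain ⟨K, hK0, hK⟩ := ev_bound hφ x
  set N : H → ℝ := clarkeDeriv φ x with hNdef
  have hNle : ∀ z : H, N z ≤ K * ‖z‖ := fun z => clarkeDeriv_le hK z
  have N_hom : ∀ c : ℝ, 0 < c → ∀ z : H, N (c • z) = c * N z :=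
    fun c hc z => clarkeDeriv_smul hφ x hc z
  have N_add : ∀ z w : H, N (z + w) ≤ N z + N w :=
    fun z w => clarkeDeriv_add_le hφ x z w
  -- the partial linear map given by `us` on `H₀`
  set f : H →ₗ.[ℝ] ℝ := ⟨H₀, (us : H₀ →L[ℝ] ℝ).toLinearMap⟩ with hfdef
  have hf : ∀ w : f.domain, f w ≤ N w := by
    intro w
    have h1 : us w ≤ clarkeDeriv φb u w := hus w
    have h2 : clarkeDeriv φb u w ≤ clarkeDeriv φ x (w : H) := part1 u w
    exact le_trans h1 h2
  obtain ⟨g, hg_ext, hg_le⟩ := exists_extension_of_le_sublinear f N N_hom N_add hf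
  have hg_bound : ∀ z : H, ‖g z‖ ≤ K * ‖z‖ := by
    intro z
    rw [Real.norm_eq_abs, abs_le]
    constructor
    · have h1 : g (-z) ≤ N (-z) := hg_le (-z)
      have h2 : N (-z) ≤ K * ‖-z‖ := hNle (-z)
      rw [norm_neg] at h2
      have h3 : g (-z) = -g z := map_neg g z
      linarith
    · exact le_trans (hg_le z) (hNle z)
  set ws : H →L[ℝ] ℝ := LinearMap.mkContinuous g (K) hg_bound with hwsdef
  refine ⟨ws, ?_, ?_⟩
  · intro h'
    have : ws h' = g h' := rfl
    rw [this]
    exact hg_le h'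
  · intro h'
    have h1 : g ((⟨(h' : H), h'.2⟩ : f.domain) : H) = f ⟨(h' : H), h'.2⟩ :=
      hg_ext ⟨(h' : H), h'.2⟩
    have h2 : f (⟨(h' : H), h'.2⟩ : f.domain) = us h' := rfl
    have h3 : ws (h' : H) = g (h' : H) := rfl
    rw [h3, h1, h2]
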